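/- arXiv:1304.4469 — 2 statements merged into one kernel-verified Lean document; each statement's English description precedes it below -/
import Mathlib

section
/- The function g0(y) := E[exp(-e^y · θ)] - E[exp(-2 e^y · θ)] is nonnegative and Lebesgue integrable on ℝ, with ∫_ℝ g0(y) dy = log 2. -/
open MeasureTheory Set Filter ProbabilityTheory
open scoped ProbabilityTheory

/-- antiderivative fact -/
lemma aux_hasDerivAt (s : ℝ) (hs : s ≠ 0) (y : ℝ) :
    HasDerivAt (fun y => -(1/s) * Real.exp (-(s * Real.exp y)))
      (Real.exp y * Real.exp (-(s * Real.exp y))) y := by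
  have h1 : HasDerivAt (fun y => -(s * Real.exp y)) (-(s * Real.exp y)) y :=
    ((Real.hasDerivAt_exp y).const_mul s).neg
  have h2 := (h1.exp).const_mul (-(1/s))
  refine h2.congr_deriv ?_
  field_simp

lemma aux_tendsto_top (s : ℝ) (hs : 0 < s) :
    Tendsto (fun y => -(1/s) * Real.exp (-(s * Real.exp y))) atTop (nhds 0) := by
  have h1 : Tendsto (fun y : ℝ => s * Real.exp y) atTop atTop :=
    (Real.tendsto_exp_atTop).const_mul_atTop hs
  have h2 : Tendsto (fun y : ℝ => Real.exp (-(s * Real.exp y))) atTop (nhds 0) :=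
    Real.tendsto_exp_neg_atTop_nhds_zero.comp h1
  simpa using h2.const_mul (-(1/s))

lemma aux_tendsto_bot (s : ℝ) (hs : 0 < s) :
    Tendsto (fun y => -(1/s) * Real.exp (-(s * Real.exp y))) atBot (nhds (-(1/s))) := by
  have h1 : Tendsto (fun y : ℝ => s * Real.exp y) atBot (nhds 0) := by
    simpa using (Real.tendsto_exp_atBot).const_mul s
  have h2 : Tendsto (fun y : ℝ => Real.exp (-(s * Real.exp y))) atBot (nhds 1) := by
    have h1' : Tendsto (fun y : ℝ => -(s * Real.exp y)) atBot (nhds 0) := by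
      simpa using h1.neg
    have := (Real.continuous_exp.tendsto 0).comp h1'
    simpa [Function.comp_def] using this
  simpa using h2.const_mul (-(1/s))

lemma aux_integrable_h (s : ℝ) (hs : 0 < s) :
    Integrable (fun y => Real.exp y * Real.exp (-(s * Real.exp y))) := by
  have hmeas : AEStronglyMeasurable (fun y => Real.exp y * Real.exp (-(s * Real.exp y)))
      (volume : Measure ℝ) := by
    apply Continuous.aestronglyMeasurable
    continuity
  rw [← integrableOn_univ, ← Set.Iic_union_Ioi (a := (0:ℝ)),
    integrableOn_union]
  constructor
  · apply Integrable.mono' (integrableOn_exp_Iic 0) hmeas.restrict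
    filter_upwards with y
    rw [Real.norm_eq_abs, abs_of_nonneg (by positivity)]
    have h2 : Real.exp (-(s * Real.exp y)) ≤ 1 := by
      rw [Real.exp_le_one_iff]; simp only [neg_nonpos]; positivity
    nlinarith [Real.exp_pos y]
  · exact integrableOn_Ioi_deriv_of_nonneg'
      (fun x _ => aux_hasDerivAt s hs.ne' x)
      (fun x _ => by positivity) (aux_tendsto_top s hs)

lemma aux_integral_h (s : ℝ) (hs : 0 < s) :
    (∫ y : ℝ, Real.exp y * Real.exp (-(s * Real.exp y))) = 1/s := by
  have := integral_of_hasDerivAt_of_tendsto (E := ℝ)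
    (fun x => aux_hasDerivAt s hs.ne' x) (aux_integrable_h s hs)
    (aux_tendsto_bot s hs) (aux_tendsto_top s hs)
  rw [this]; ring

lemma aux_slice (y : ℝ) :
    Real.exp (-(Real.exp y)) - Real.exp (-(2 * Real.exp y)) =
      ∫ s in Set.Ioc (1:ℝ) 2, Real.exp y * Real.exp (-(s * Real.exp y)) := by
  rw [← intervalIntegral.integral_of_le (by norm_num : (1:ℝ) ≤ 2)]
  have hderiv : ∀ s ∈ Set.uIcc (1:ℝ) 2,
      HasDerivAt (fun s => -Real.exp (-(s * Real.exp y)))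
        (Real.exp y * Real.exp (-(s * Real.exp y))) s := by
    intro s _
    have h1 : HasDerivAt (fun s : ℝ => -(s * Real.exp y)) (-(Real.exp y)) s :=
      (hasDerivAt_mul_const (Real.exp y)).neg
    have h2 := (h1.exp).neg
    refine h2.congr_deriv ?_
    ring
  rw [intervalIntegral.integral_eq_sub_of_hasDerivAt hderiv (by
    apply Continuous.intervalIntegrable; continuity)]
  ring

noncomputable def Hfun (y : ℝ) : ℝ × ℝ → ℝ := fun p => Real.exp p.2 * Real.exp (-(p.1 * Real.exp p.2))

lemma aux_integrable_H :
    Integrable (fun p : ℝ × ℝ => Real.exp p.2 * Real.exp (-(p.1 * Real.exp p.2)))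
      (((volume : Measure ℝ).restrict (Set.Ioc (1:ℝ) 2)).prod volume) := by
  have hmeas : AEStronglyMeasurable (fun p : ℝ × ℝ => Real.exp p.2 * Real.exp (-(p.1 * Real.exp p.2)))
      (((volume : Measure ℝ).restrict (Set.Ioc (1:ℝ) 2)).prod volume) := by
    apply Continuous.aestronglyMeasurable; continuity
  rw [integrable_prod_iff hmeas]
  constructor
  · rw [ae_restrict_iff' measurableSet_Ioc]
    filter_upwards with s hs
    exact aux_integrable_h s (by linarith [hs.1])
  · apply Integrable.mono' (integrable_const (1:ℝ)) hmeas.norm.integral_prod_right'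
    rw [ae_restrict_iff' measurableSet_Ioc]
    filter_upwards with s hs
    have h1 : (0:ℝ) < s := by linarith [hs.1]
    have heq : (∫ y : ℝ, ‖Real.exp y * Real.exp (-(s * Real.exp y))‖) = 1/s := by
      rw [← aux_integral_h s h1]
      congr 1; funext y
      rw [Real.norm_eq_abs, abs_of_nonneg (by positivity)]
    rw [heq, Real.norm_eq_abs, abs_of_nonneg (by positivity)]
    rw [div_le_one h1]; linarith [hs.1]

lemma aux_F1_integrable :
    Integrable (fun y : ℝ => Real.exp (-(Real.exp y)) - Real.exp (-(2 * Real.exp y))) := by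
  have := aux_integrable_H.integral_prod_right
  apply this.congr
  filter_upwards with y
  exact (aux_slice y).symm

lemma aux_F1_integral :
    (∫ y : ℝ, (Real.exp (-(Real.exp y)) - Real.exp (-(2 * Real.exp y)))) = Real.log 2 := by
  have hswap := integral_integral_swap
    (f := fun s y : ℝ => Real.exp y * Real.exp (-(s * Real.exp y)))
    (μ := (volume : Measure ℝ).restrict (Set.Ioc (1:ℝ) 2)) (ν := volume)
    aux_integrable_H
  calc (∫ y : ℝ, (Real.exp (-(Real.exp y)) - Real.exp (-(2 * Real.exp y))))
      = ∫ y : ℝ, ∫ s in Set.Ioc (1:ℝ) 2, Real.exp y * Real.exp (-(s * Real.exp y)) := by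
        congr 1; funext y; exact aux_slice y
    _ = ∫ s in Set.Ioc (1:ℝ) 2, ∫ y : ℝ, Real.exp y * Real.exp (-(s * Real.exp y)) :=
        hswap.symm
    _ = ∫ s in Set.Ioc (1:ℝ) 2, 1/s := by
        apply setIntegral_congr_fun measurableSet_Ioc
        intro s hs
        exact aux_integral_h s (by linarith [hs.1])
    _ = Real.log 2 := by
        rw [← intervalIntegral.integral_of_le (by norm_num : (1:ℝ) ≤ 2)]
        rw [integral_one_div (by
          intro h
          rcases Set.mem_uIcc.1 h with ⟨h1, _⟩ | ⟨_, h2⟩ <;> norm_num at * <;> linarith)]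
        norm_num

lemma aux_Fa (a : ℝ) (ha : 0 < a) :
    Integrable (fun y : ℝ => Real.exp (-(Real.exp y * a)) - Real.exp (-(2 * Real.exp y * a))) ∧
    (∫ y : ℝ, (Real.exp (-(Real.exp y * a)) - Real.exp (-(2 * Real.exp y * a)))) = Real.log 2 := by
  have key : ∀ y : ℝ, Real.exp (-(Real.exp y * a)) - Real.exp (-(2 * Real.exp y * a)) =
      (fun z => Real.exp (-(Real.exp z)) - Real.exp (-(2 * Real.exp z))) (y + Real.log a) := by
    intro y
    simp only [Real.exp_add, Real.exp_log ha]
    ring_nf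
  have hmp := measurePreserving_add_right (volume : Measure ℝ) (Real.log a)
  constructor
  · have := (hmp.integrable_comp aux_F1_integrable.aestronglyMeasurable).2 aux_F1_integrable
    apply this.congr
    filter_upwards with y
    exact (key y).symm
  · calc (∫ y : ℝ, (Real.exp (-(Real.exp y * a)) - Real.exp (-(2 * Real.exp y * a))))
        = ∫ y : ℝ, (fun z => Real.exp (-(Real.exp z)) - Real.exp (-(2 * Real.exp z)))
            (y + Real.log a) := by congr 1; funext y; exact key y
      _ = ∫ y : ℝ, (Real.exp (-(Real.exp y)) - Real.exp (-(2 * Real.exp y))) :=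
          integral_add_right_eq_self
            (μ := (volume : Measure ℝ))
            (fun z => Real.exp (-(Real.exp z)) - Real.exp (-(2 * Real.exp z))) (Real.log a)
      _ = Real.log 2 := aux_F1_integral

theorem stmt_0 {Ω : Type*} [MeasureSpace Ω] [IsProbabilityMeasure (ℙ : Measure Ω)]
    (θ : Ω → ℝ) (hθmeas : Measurable θ) (hθ : ∀ ω, θ ω ∈ Set.Ioc (0:ℝ) 1) :
    (∀ y : ℝ, 0 ≤ (∫ ω, Real.exp (-(Real.exp y * θ ω))) -
        ∫ ω, Real.exp (-(2 * Real.exp y * θ ω))) ∧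
    MeasureTheory.Integrable
      (fun y : ℝ => (∫ ω, Real.exp (-(Real.exp y * θ ω))) -
        ∫ ω, Real.exp (-(2 * Real.exp y * θ ω))) volume ∧
    (∫ y : ℝ, ((∫ ω, Real.exp (-(Real.exp y * θ ω))) -
        ∫ ω, Real.exp (-(2 * Real.exp y * θ ω)))) = Real.log 2 := by
  have hθpos : ∀ ω, 0 < θ ω := fun ω => (hθ ω).1
  -- integrability of the two ω-integrands for each y
  have hint1 : ∀ y : ℝ, Integrable (fun ω => Real.exp (-(Real.exp y * θ ω))) ℙ := by
    intro y
    apply Integrable.mono' (integrable_const (1:ℝ))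
      ((hθmeas.const_mul _).neg.exp.aestronglyMeasurable)
    filter_upwards with ω
    rw [Real.norm_eq_abs, abs_of_nonneg (Real.exp_pos _).le]
    apply Real.exp_le_one_iff.2
    refine neg_nonpos.2 ?_
    exact mul_nonneg (by positivity) (hθpos ω).le
  have hint2 : ∀ y : ℝ, Integrable (fun ω => Real.exp (-(2 * Real.exp y * θ ω))) ℙ := by
    intro y
    apply Integrable.mono' (integrable_const (1:ℝ))
      ((hθmeas.const_mul _).neg.exp.aestronglyMeasurable)
    filter_upwards with ω
    rw [Real.norm_eq_abs, abs_of_nonneg (Real.exp_pos _).le]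
    apply Real.exp_le_one_iff.2
    refine neg_nonpos.2 ?_
    exact mul_nonneg (by positivity) (hθpos ω).le
  have hptwise : ∀ y : ℝ, ∀ ω : Ω,
      Real.exp (-(2 * Real.exp y * θ ω)) ≤ Real.exp (-(Real.exp y * θ ω)) := by
    intro y ω
    apply Real.exp_le_exp.2
    have h1 : Real.exp y * θ ω ≤ 2 * Real.exp y * θ ω := by
      nlinarith [Real.exp_pos y, (hθpos ω)]
    linarith
  refine ⟨fun y => ?_, ?_, ?_⟩
  · rw [sub_nonneg]
    exact integral_mono (hint2 y) (hint1 y) (hptwise y)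
  all_goals {
    have hG : Integrable (fun p : Ω × ℝ =>
        Real.exp (-(Real.exp p.2 * θ p.1)) - Real.exp (-(2 * Real.exp p.2 * θ p.1)))
        ((ℙ : Measure Ω).prod volume) := by
      have hmeas : AEStronglyMeasurable (fun p : Ω × ℝ =>
          Real.exp (-(Real.exp p.2 * θ p.1)) - Real.exp (-(2 * Real.exp p.2 * θ p.1)))
          ((ℙ : Measure Ω).prod volume) := by
        apply Measurable.aestronglyMeasurable
        have h1 : Measurable (fun p : Ω × ℝ => Real.exp p.2 * θ p.1) :=
          (Real.measurable_exp.comp measurable_snd).mul (hθmeas.comp measurable_fst)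
        have h2 : Measurable (fun p : Ω × ℝ => 2 * Real.exp p.2 * θ p.1) := by
          have he : (fun p : Ω × ℝ => 2 * Real.exp p.2 * θ p.1) =
              fun p => 2 * (Real.exp p.2 * θ p.1) := by funext p; ring
          rw [he]; exact h1.const_mul 2
        exact (h1.neg.exp).sub (h2.neg.exp)
      rw [integrable_prod_iff hmeas]
      refine ⟨?_, ?_⟩
      · filter_upwards with ω
        exact (aux_Fa (θ ω) (hθpos ω)).1
      · apply Integrable.congr (integrable_const (Real.log 2))
        filter_upwards with ω
        have hnn : ∀ y : ℝ, 0 ≤ Real.exp (-(Real.exp y * θ ω)) -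
            Real.exp (-(2 * Real.exp y * θ ω)) := fun y => sub_nonneg.2 (hptwise y ω)
        calc Real.log 2
            = ∫ y : ℝ, (Real.exp (-(Real.exp y * θ ω)) -
                Real.exp (-(2 * Real.exp y * θ ω))) := ((aux_Fa (θ ω) (hθpos ω)).2).symm
          _ = ∫ y : ℝ, ‖Real.exp (-(Real.exp y * θ ω)) -
                Real.exp (-(2 * Real.exp y * θ ω))‖ := by
              congr 1; funext y
              rw [Real.norm_eq_abs, abs_of_nonneg (hnn y)]
    have hkey : ∀ y : ℝ, (∫ ω, Real.exp (-(Real.exp y * θ ω))) -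
        (∫ ω, Real.exp (-(2 * Real.exp y * θ ω))) =
        ∫ ω, (Real.exp (-(Real.exp y * θ ω)) - Real.exp (-(2 * Real.exp y * θ ω))) := by
      intro y
      rw [integral_sub (hint1 y) (hint2 y)]
    first
    | · -- integrability
        apply (hG.integral_prod_right).congr
        filter_upwards with y
        exact (hkey y).symm
    | · -- integral value
        have hswap := integral_integral_swap
          (f := fun (ω : Ω) (y : ℝ) =>
            Real.exp (-(Real.exp y * θ ω)) - Real.exp (-(2 * Real.exp y * θ ω)))
          (μ := (ℙ : Measure Ω)) (ν := volume) hG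
        calc (∫ y : ℝ, ((∫ ω, Real.exp (-(Real.exp y * θ ω))) -
              ∫ ω, Real.exp (-(2 * Real.exp y * θ ω))))
            = ∫ y : ℝ, ∫ ω, (Real.exp (-(Real.exp y * θ ω)) -
                Real.exp (-(2 * Real.exp y * θ ω))) := by
              congr 1; funext y; exact hkey y
          _ = ∫ ω, ∫ y : ℝ, (Real.exp (-(Real.exp y * θ ω)) -
                Real.exp (-(2 * Real.exp y * θ ω))) := hswap.symm
          _ = ∫ ω, Real.log 2 := by
              congr 1; funext ω; exact (aux_Fa (θ ω) (hθpos ω)).2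
          _ = Real.log 2 := by simp
  }
end

section
/- The function y ↦ e^{-y} · (E[exp(-e^y θ)] - E[exp(-2 e^y θ)]) is nonincreasing on ℝ. -/
open MeasureTheory Set Filter ProbabilityTheory
open scoped ProbabilityTheory

lemma rep_aux (u : ℝ) (hu : 0 < u) :
    (Real.exp (-u) - Real.exp (-(2*u)))/u = ∫ a in (1:ℝ)..2, Real.exp (-(u*a)) := by
  have h : ∀ a ∈ Set.uIcc (1:ℝ) 2,
      HasDerivAt (fun a : ℝ => -Real.exp (-(u*a))/u) (Real.exp (-(u*a))) a := by
    intro a _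
    have h1 : HasDerivAt (fun a : ℝ => -(u*a)) (-u) a := by
      simpa [Pi.neg_def] using ((hasDerivAt_id a).const_mul u).neg
    have h2 := h1.exp
    have h3 := (h2.neg).div_const u
    convert h3 using 1
    · rfl
    · rfl
    · rfl
    · field_simp
  have hcont : IntervalIntegrable (fun a : ℝ => Real.exp (-(u*a))) MeasureTheory.volume 1 2 :=
    (Real.continuous_exp.comp (continuous_const.mul continuous_id).neg).intervalIntegrable _ _
  rw [intervalIntegral.integral_eq_sub_of_hasDerivAt h hcont]
  field_simp
  ring_nf

lemma key_aux {s t : ℝ} (hs : 0 < s) (hst : s ≤ t) :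
    (Real.exp (-t) - Real.exp (-(2*t)))/t ≤ (Real.exp (-s) - Real.exp (-(2*s)))/s := by
  have ht : 0 < t := lt_of_lt_of_le hs hst
  rw [rep_aux s hs, rep_aux t ht]
  apply intervalIntegral.integral_mono_on (by norm_num)
  · exact (Real.continuous_exp.comp (continuous_const.mul continuous_id).neg).intervalIntegrable _ _
  · exact (Real.continuous_exp.comp (continuous_const.mul continuous_id).neg).intervalIntegrable _ _
  · intro a ha
    apply Real.exp_le_exp.2
    have ha1 : (1:ℝ) ≤ a := ha.1
    nlinarith

lemma pointwise_aux {y z p : ℝ} (hyz : y ≤ z) (hp : 0 < p) :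
    Real.exp (-z) * (Real.exp (-(Real.exp z * p)) - Real.exp (-(2 * Real.exp z * p))) ≤
    Real.exp (-y) * (Real.exp (-(Real.exp y * p)) - Real.exp (-(2 * Real.exp y * p))) := by
  set s := Real.exp y * p with hs_def
  set t := Real.exp z * p with ht_def
  have hs : 0 < s := mul_pos (Real.exp_pos _) hp
  have ht : 0 < t := mul_pos (Real.exp_pos _) hp
  have hst : s ≤ t := by
    apply mul_le_mul_of_nonneg_right (Real.exp_le_exp.2 hyz) hp.le
  have key := key_aux hs hst
  have hey : Real.exp (-y) = p / s := by
    rw [hs_def, Real.exp_neg]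
    field_simp
  have hez : Real.exp (-z) = p / t := by
    rw [ht_def, Real.exp_neg]
    field_simp
  have h2s : 2 * Real.exp y * p = 2 * s := by rw [hs_def]; ring
  have h2t : 2 * Real.exp z * p = 2 * t := by rw [ht_def]; ring
  rw [hey, hez, h2s, h2t]
  have h := mul_le_mul_of_nonneg_left key hp.le
  convert h using 1
  · rfl
  · ring
  · ring

theorem stmt_2 {Ω : Type*} [MeasureSpace Ω] [IsProbabilityMeasure (ℙ : Measure Ω)]
    (θ : Ω → ℝ) (hθmeas : Measurable θ) (hθ : ∀ ω, θ ω ∈ Set.Ioc (0:ℝ) 1) :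
    Antitone (fun y : ℝ => Real.exp (-y) *
      ((∫ ω, Real.exp (-(Real.exp y * θ ω))) -
        ∫ ω, Real.exp (-(2 * Real.exp y * θ ω)))) := by
  have hint : ∀ c : ℝ, 0 < c → Integrable (fun ω => Real.exp (-(c * θ ω))) (ℙ : Measure Ω) := by
    intro c hc
    apply Integrable.mono' (integrable_const 1)
    · exact ((hθmeas.const_mul c).neg.exp).aestronglyMeasurable
    · filter_upwards with ω
      rw [Real.norm_eq_abs, abs_of_pos (Real.exp_pos _)]
      apply Real.exp_le_one_iff.2
      have := (hθ ω).1
      nlinarith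
  intro a b hab
  simp only
  have h2a : ∀ ω, -(2 * Real.exp a * θ ω) = -((2 * Real.exp a) * θ ω) := by intro ω; ring_nf
  have h2b : ∀ ω, -(2 * Real.exp b * θ ω) = -((2 * Real.exp b) * θ ω) := by intro ω; ring_nf
  have ia1 := hint (Real.exp a) (Real.exp_pos a)
  have ia2 : Integrable (fun ω => Real.exp (-(2 * Real.exp a * θ ω))) (ℙ : Measure Ω) := by
    simpa [h2a] using hint (2 * Real.exp a) (by positivity)
  have ib1 := hint (Real.exp b) (Real.exp_pos b)
  have ib2 : Integrable (fun ω => Real.exp (-(2 * Real.exp b * θ ω))) (ℙ : Measure Ω) := by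
    simpa [h2b] using hint (2 * Real.exp b) (by positivity)
  rw [← integral_sub ia1 ia2, ← integral_sub ib1 ib2, ← integral_const_mul, ← integral_const_mul]
  apply integral_mono ((ib1.sub ib2).const_mul _) ((ia1.sub ia2).const_mul _)
  intro ω
  exact pointwise_aux hab (hθ ω).1
end
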